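/- Let λ = (√2/2)(1 + i) and c = i/(√2 (1 + i)). For every φ ∈ 𝓢(ℝ,ℂ), the function f(x) = c ∫_ℝ φ(x - s) e^{-λ |s|} ds is again a Schwartz function; that is, there exists ψ ∈ 𝓢(ℝ,ℂ) with ψ(x) = c ∫_ℝ φ(x - s) e^{-λ |s|} ds for all x ∈ ℝ (equivalently, f is smooth and for all k, l ≥ 0 there is C with |x|^l |f^{(k)}(x)| ≤ C for all x). -/

import Mathlib

open MeasureTheory

private lemma aux_pow_add_le (k : ℕ) {u v : ℝ} (hu : 0 ≤ u) (hv : 0 ≤ v) :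
    (u + v) ^ k ≤ 2 ^ k * (u ^ k + v ^ k) := by
  have h1 : u + v ≤ 2 * max u v := by
    rcases le_total u v with h | h
    · simp [max_eq_right h]; nlinarith
    · simp [max_eq_left h]; nlinarith
  calc (u + v) ^ k ≤ (2 * max u v) ^ k :=
        pow_le_pow_left₀ (by positivity) h1 k
    _ = 2 ^ k * (max u v) ^ k := mul_pow 2 (max u v) k
    _ ≤ 2 ^ k * (u ^ k + v ^ k) := by
        have : (max u v) ^ k ≤ u ^ k + v ^ k := by
          rcases le_total u v with h | h
          · rw [max_eq_right h]; exact le_add_of_nonneg_left (pow_nonneg hu k)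
          · rw [max_eq_left h]; exact le_add_of_nonneg_right (pow_nonneg hv k)
        have h2 : (0:ℝ) ≤ 2 ^ k := by positivity
        nlinarith

private lemma aux_integrable_pow_exp (k : ℕ) {a : ℝ} (ha : 0 < a) :
    Integrable (fun s : ℝ => |s| ^ k * Real.exp (-a * |s|)) := by
  have h0 : IntegrableOn (fun s : ℝ => |s| ^ k * Real.exp (-a * |s|)) (Set.Ioi 0) := by
    have h := integrableOn_rpow_mul_exp_neg_mul_rpow (p := 1) (s := (k : ℝ))
      (lt_of_lt_of_le neg_one_lt_zero (Nat.cast_nonneg k)) one_pos ha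
    refine h.congr_fun (fun x hx => ?_) measurableSet_Ioi
    have hx' : (0:ℝ) < x := hx
    simp only [abs_of_pos hx', Real.rpow_natCast, Real.rpow_one]
  rw [← integrableOn_univ, ← Set.Iic_union_Ioi (a := (0:ℝ)), integrableOn_union]
  constructor
  · rw [← Measure.map_neg_eq_self (volume : Measure ℝ)]
    have m : MeasurableEmbedding fun x : ℝ => -x := (Homeomorph.neg ℝ).measurableEmbedding
    rw [m.integrableOn_map_iff]
    simp_rw [Function.comp_def, abs_neg, Set.neg_preimage, Set.neg_Iic, neg_zero]
    exact Iff.mpr integrableOn_Ici_iff_integrableOn_Ioi h0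
  · exact h0

/-- The operator `T φ(x) = c ∫ φ(x-s) e^{-λ|s|} ds`, convolution with the Green's function
`G(x) = c e^{-λ|x|}` (`λ = (√2/2)(1+i)`, `c = i/(√2(1+i))`), maps `𝓢(ℝ)` into `𝓢(ℝ)`:
for every Schwartz `φ` there is a Schwartz `ψ` with `ψ(x) = c ∫ φ(x-s) e^{-λ|s|} ds`. -/
theorem statement15 (l c : ℂ)
    (hl : l = (Real.sqrt 2 / 2 : ℝ) * (1 + Complex.I))
    (hc : c = Complex.I / ((Real.sqrt 2 : ℝ) * (1 + Complex.I))) :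
    ∀ φ : SchwartzMap ℝ ℂ,
      ∃ ψ : SchwartzMap ℝ ℂ,
        ∀ x : ℝ, ψ x = c * ∫ s : ℝ, φ (x - s) * Complex.exp (-l * ((|s| : ℝ) : ℂ)) := by
  intro φ
  set a : ℝ := Real.sqrt 2 / 2 with ha_def
  have ha : 0 < a := by
    have : (0:ℝ) < Real.sqrt 2 := Real.sqrt_pos.2 (by norm_num)
    positivity
  set g : ℝ → ℂ := fun s => Complex.exp (-l * ((|s| : ℝ) : ℂ)) with hg_def
  have hgcont : Continuous g := by
    exact Complex.continuous_exp.comp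
      (continuous_const.mul (Complex.continuous_ofReal.comp continuous_abs))
  have hgnorm : ∀ s : ℝ, ‖g s‖ = Real.exp (-a * |s|) := by
    intro s
    rw [hg_def]
    simp only [Complex.norm_exp]
    congr 1
    subst hl
    simp [Complex.mul_re, Complex.add_re, Complex.add_im, ha_def]
  have hexp : Integrable (fun s : ℝ => Real.exp (-a * |s|)) := by
    simpa using aux_integrable_pow_exp 0 ha
  have hgint : Integrable g := by
    rw [← integrable_norm_iff hgcont.aestronglyMeasurable]
    exact hexp.congr (Filter.Eventually.of_forall fun s => (hgnorm s).symm)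
  -- the iterated derivatives of φ as Schwartz maps
  set D : ℕ → SchwartzMap ℝ ℂ := fun n => (SchwartzMap.derivCLM ℝ ℂ)^[n] φ with hD_def
  have hDapp : ∀ (n : ℕ) (y : ℝ), D (n + 1) y = deriv (⇑(D n)) y := by
    intro n y
    have hs : D (n + 1) = SchwartzMap.derivCLM ℝ ℂ (D n) :=
      Function.iterate_succ_apply' (⇑(SchwartzMap.derivCLM ℝ ℂ)) n φ
    rw [hs]
    exact SchwartzMap.derivCLM_apply ℝ _ y
  have hDbdd : ∀ n : ℕ, ∃ C : ℝ, 0 ≤ C ∧ ∀ y : ℝ, ‖D n y‖ ≤ C := by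
    intro n
    obtain ⟨C, hCpos, hC⟩ := (D n).decay 0 0
    refine ⟨C, hCpos.le, fun y => ?_⟩
    have := hC y
    simpa [norm_iteratedFDeriv_zero] using this
  have hDdecay : ∀ (n k : ℕ), ∃ C : ℝ, 0 ≤ C ∧ ∀ y : ℝ, ‖y‖ ^ k * ‖D n y‖ ≤ C := by
    intro n k
    obtain ⟨C, hCpos, hC⟩ := (D n).decay k 0
    refine ⟨C, hCpos.le, fun y => ?_⟩
    have := hC y
    simpa [norm_iteratedFDeriv_zero] using this
  -- the integrals
  set F : ℕ → ℝ → ℂ := fun n x => ∫ s : ℝ, D n (x - s) * g s with hF_def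
  have hint : ∀ (n : ℕ) (x : ℝ), Integrable (fun s : ℝ => D n (x - s) * g s) := by
    intro n x
    obtain ⟨C, _, hC⟩ := hDbdd n
    exact hgint.bdd_mul
      (((D n).continuous.comp (continuous_const.sub continuous_id)).aestronglyMeasurable)
      (Filter.Eventually.of_forall fun s => hC _)
  have hFderiv : ∀ (n : ℕ) (x : ℝ), HasDerivAt (F n) (F (n + 1) x) x := by
    intro n x₀
    obtain ⟨C, _, hC⟩ := hDbdd (n + 1)
    have key := hasDerivAt_integral_of_dominated_loc_of_deriv_le
      (F := fun (x : ℝ) (s : ℝ) => D n (x - s) * g s)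
      (F' := fun (x : ℝ) (s : ℝ) => D (n + 1) (x - s) * g s)
      (bound := fun s => C * ‖g s‖) (μ := volume) (x₀ := x₀) (Metric.ball_mem_nhds x₀ one_pos)
      (Filter.Eventually.of_forall fun x =>
        (((D n).continuous.comp (continuous_const.sub continuous_id)).mul
          hgcont).aestronglyMeasurable)
      (hint n x₀)
      ((((D (n + 1)).continuous.comp (continuous_const.sub continuous_id)).mul
          hgcont).aestronglyMeasurable)
      (Filter.Eventually.of_forall fun s => fun x _ => by
        rw [norm_mul]
        exact mul_le_mul_of_nonneg_right (hC _) (norm_nonneg _))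
      (hgint.norm.const_mul C)
      (Filter.Eventually.of_forall fun s => fun x _ => by
        have h1 : HasDerivAt (fun x : ℝ => x - s) 1 x := (hasDerivAt_id x).sub_const s
        have h2 : HasDerivAt (⇑(D n)) (D (n + 1) (x - s)) (x - s) := by
          rw [hDapp n (x - s)]
          exact ((D n).differentiable (x - s)).hasDerivAt
        have h3 := (h2.scomp x h1)
        simpa using h3.mul_const (g s))
    exact key.2
  have hFdiff : ∀ n : ℕ, Differentiable ℝ (F n) := fun n x => (hFderiv n x).differentiableAt
  have hFderiv' : ∀ n : ℕ, deriv (F n) = F (n + 1) := fun n =>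
    funext fun x => (hFderiv n x).deriv
  have hFcont : ∀ (m : ℕ) (n : ℕ), ContDiff ℝ (m : WithTop ℕ∞) (F n) := by
    intro m
    induction m with
    | zero => intro n; rw [Nat.cast_zero, contDiff_zero]; exact (hFdiff n).continuous
    | succ m ih =>
      intro n
      rw [Nat.cast_add, Nat.cast_one]
      refine contDiff_succ_iff_deriv.2 ⟨hFdiff n, ?_, ?_⟩
      · intro h; exact absurd h (by simp)
      · rw [hFderiv' n]; exact ih (n + 1)
  have hFsmooth : ContDiff ℝ ((⊤ : ℕ∞) : WithTop ℕ∞) (F 0) :=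
    contDiff_infty.2 fun m => hFcont m 0
  have hiter : ∀ n : ℕ, iteratedDeriv n (F 0) = F n := by
    intro n
    induction n with
    | zero => exact iteratedDeriv_zero
    | succ n ih => rw [iteratedDeriv_succ, ih, hFderiv' n]
  have hdecay : ∀ (k n : ℕ), ∃ C : ℝ, ∀ x : ℝ, ‖x‖ ^ k * ‖F n x‖ ≤ C := by
    intro k n
    obtain ⟨C₀, hC₀0, hC₀⟩ := hDbdd n
    obtain ⟨C₁, hC₁0, hC₁⟩ := hDdecay n k
    set B : ℝ → ℝ := fun s =>
      2 ^ k * (C₁ * Real.exp (-a * |s|) + C₀ * (|s| ^ k * Real.exp (-a * |s|))) with hB_def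
    have hBint : Integrable B :=
      (((hexp.const_mul C₁).add ((aux_integrable_pow_exp k ha).const_mul C₀)).const_mul (2 ^ k))
    refine ⟨∫ s, B s, fun x => ?_⟩
    have hpt : ∀ s : ℝ, ‖x‖ ^ k * ‖D n (x - s) * g s‖ ≤ B s := by
      intro s
      rw [norm_mul, hgnorm s]
      have hexp0 : (0:ℝ) ≤ Real.exp (-a * |s|) := (Real.exp_pos _).le
      have hx : ‖x‖ ≤ ‖x - s‖ + ‖s‖ := by
        calc ‖x‖ = ‖(x - s) + s‖ := by ring_nf
          _ ≤ ‖x - s‖ + ‖s‖ := norm_add_le _ _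
      have hxk : ‖x‖ ^ k ≤ 2 ^ k * (‖x - s‖ ^ k + ‖s‖ ^ k) :=
        le_trans (pow_le_pow_left₀ (norm_nonneg x) hx k)
          (aux_pow_add_le k (norm_nonneg _) (norm_nonneg _))
      have key : ‖x‖ ^ k * ‖D n (x - s)‖ ≤ 2 ^ k * (C₁ + ‖s‖ ^ k * C₀) := by
        calc ‖x‖ ^ k * ‖D n (x - s)‖
            ≤ (2 ^ k * (‖x - s‖ ^ k + ‖s‖ ^ k)) * ‖D n (x - s)‖ :=
              mul_le_mul_of_nonneg_right hxk (norm_nonneg _)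
          _ = 2 ^ k * (‖x - s‖ ^ k * ‖D n (x - s)‖ + ‖s‖ ^ k * ‖D n (x - s)‖) := by ring
          _ ≤ 2 ^ k * (C₁ + ‖s‖ ^ k * C₀) := by
              have h1 := hC₁ (x - s)
              have h2 : ‖s‖ ^ k * ‖D n (x - s)‖ ≤ ‖s‖ ^ k * C₀ :=
                mul_le_mul_of_nonneg_left (hC₀ _) (by positivity)
              have h3 : (0:ℝ) ≤ 2 ^ k := by positivity
              nlinarith
      calc ‖x‖ ^ k * (‖D n (x - s)‖ * Real.exp (-a * |s|))
          = (‖x‖ ^ k * ‖D n (x - s)‖) * Real.exp (-a * |s|) := by ring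
        _ ≤ (2 ^ k * (C₁ + ‖s‖ ^ k * C₀)) * Real.exp (-a * |s|) :=
            mul_le_mul_of_nonneg_right key hexp0
        _ = B s := by rw [hB_def]; simp only [Real.norm_eq_abs]; ring
    calc ‖x‖ ^ k * ‖F n x‖
        ≤ ‖x‖ ^ k * ∫ s, ‖D n (x - s) * g s‖ :=
          mul_le_mul_of_nonneg_left (norm_integral_le_integral_norm _) (by positivity)
      _ = ∫ s, ‖x‖ ^ k * ‖D n (x - s) * g s‖ := (integral_const_mul _ _).symm
      _ ≤ ∫ s, B s :=
          integral_mono ((hint n x).norm.const_mul _) hBint hpt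
  -- build the Schwartz map
  refine ⟨⟨c • F 0, hFsmooth.const_smul c, ?_⟩, fun x => ?_⟩
  · intro k n
    obtain ⟨C, hC⟩ := hdecay k n
    refine ⟨‖c‖ * C, fun x => ?_⟩
    have heq : iteratedFDeriv ℝ n (c • F 0) x
        = c • iteratedFDeriv ℝ n (F 0) x :=
      iteratedFDeriv_const_smul_apply (hFcont n 0).contDiffAt
    rw [heq, norm_smul c (iteratedFDeriv ℝ n (F 0) x), norm_iteratedFDeriv_eq_norm_iteratedDeriv, hiter n]
    calc ‖x‖ ^ k * (‖c‖ * ‖F n x‖) = ‖c‖ * (‖x‖ ^ k * ‖F n x‖) := by ring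
      _ ≤ ‖c‖ * C := mul_le_mul_of_nonneg_left (hC x) (norm_nonneg c)
  · show (c • F 0) x = _
    rw [Pi.smul_apply, smul_eq_mul]
    rfl
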